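/- Let φ : [0,∞) → ℝ be differentiable and define W : SL(2) → ℝ by W(F) = φ(λmax(F) − 1/λmax(F)), where λmax(F) is the largest singular value of F. Then W is rank-one convex if and only if φ is nondecreasing and convex on [0,∞). -/
import Mathlib


open Matrix

/-- The largest singular value of a real 2×2 matrix `F`, i.e. the square root of
the largest eigenvalue of `FᵀF`. -/
noncomputable def lambdaMax (F : Matrix (Fin 2) (Fin 2) ℝ) : ℝ :=
  Real.sqrt (((Fᵀ * F).trace + Real.sqrt ((Fᵀ * F).trace ^ 2 - 4 * (Fᵀ * F).det)) / 2)

/-- Rank-one convexity on `SL(2)`: for every `F` with `det F = 1` and all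
`ξ, η ∈ ℝ²` with `⟨F⁻ᵀ, ξηᵀ⟩ = 0`, the map `t ↦ W(F + t·ξηᵀ)` is convex. -/
def RankOneConvexSL (W : Matrix (Fin 2) (Fin 2) ℝ → ℝ) : Prop :=
  ∀ F : Matrix (Fin 2) (Fin 2) ℝ, F.det = 1 →
    ∀ ξ η : Fin 2 → ℝ, ((vecMulVec ξ η)ᵀ * F⁻¹ᵀ).trace = 0 →
      ConvexOn ℝ Set.univ (fun t : ℝ => W (F + t • vecMulVec ξ η))

/-- On `SL(2)` the trace of `FᵀF` (the sum of the squared singular values) is at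
least `2`, by AM–GM since the singular values multiply to `1`. -/
lemma trace_ge_two {G : Matrix (Fin 2) (Fin 2) ℝ} (hG : G.det = 1) :
    2 ≤ (Gᵀ * G).trace := by
  rw [Matrix.det_fin_two] at hG
  simp [Matrix.trace, Matrix.mul_apply, Fin.sum_univ_two, Matrix.diag,
    Matrix.transpose_apply]
  nlinarith [sq_nonneg (G 0 0 - G 1 1), sq_nonneg (G 0 1 + G 1 0)]

/-- On `SL(2)`, `λmax − 1/λmax = √(tr(FᵀF) − 2)`. -/
lemma lambdaMax_sub {F : Matrix (Fin 2) (Fin 2) ℝ} (hF : F.det = 1) :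
    lambdaMax F - 1 / lambdaMax F = Real.sqrt ((Fᵀ * F).trace - 2) := by
  have hdet : (Fᵀ * F).det = 1 := by
    rw [Matrix.det_mul, Matrix.det_transpose, hF]; ring
  set T := (Fᵀ * F).trace with hTdef
  have hT : 2 ≤ T := trace_ge_two hF
  unfold lambdaMax
  rw [hdet, ← hTdef]
  set D := Real.sqrt (T ^ 2 - 4 * 1) with hDdef
  have hD0 : 0 ≤ D := Real.sqrt_nonneg _
  have hD2 : D ^ 2 = T ^ 2 - 4 := by
    rw [hDdef, Real.sq_sqrt (by nlinarith)]; ring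
  set L := Real.sqrt ((T + D) / 2) with hLdef
  have hL2 : L ^ 2 = (T + D) / 2 := Real.sq_sqrt (by linarith)
  have hL1 : 1 ≤ L := by
    rw [hLdef, show (1:ℝ) = Real.sqrt 1 from Real.sqrt_one.symm]
    exact Real.sqrt_le_sqrt (by linarith)
  have hLpos : 0 < L := by linarith
  have hLne : L ≠ 0 := ne_of_gt hLpos
  have h4 : (T + D) * (T - D) = 4 := by nlinarith
  have key : (L - 1 / L) ^ 2 = T - 2 := by
    field_simp
    nlinarith [hL2, h4]
  have hnn : 0 ≤ L - 1 / L := by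
    have : 1 / L ≤ 1 := by
      rw [div_le_one hLpos]; exact hL1
    linarith
  rw [← Real.sqrt_sq hnn, key]

/-- The square root of a nonnegative quadratic with nonnegative leading
coefficient is convex. -/
lemma convexOn_sqrt_quad (a b c : ℝ) (ha : 0 ≤ a)
    (hq : ∀ t : ℝ, 0 ≤ a * t ^ 2 + 2 * b * t + c) :
    ConvexOn ℝ Set.univ fun t : ℝ => Real.sqrt (a * t ^ 2 + 2 * b * t + c) := by
  have hdisc : b ^ 2 ≤ a * c := by
    rcases eq_or_lt_of_le ha with h | h
    · have hb : b = 0 := by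
        by_contra hb
        have h1 := hq ((-c - 1) / (2 * b))
        rw [← h] at h1
        have : 2 * b * ((-c - 1) / (2 * b)) = -c - 1 := by field_simp
        nlinarith [h1, this]
      rw [hb, ← h]; nlinarith
    · have h1 := hq (-b / a)
      have h2 : a * (a * (-b / a) ^ 2 + 2 * b * (-b / a) + c) = a * c - b ^ 2 := by
        field_simp; ring
      nlinarith [mul_nonneg h.le h1]
  refine ⟨convex_univ, ?_⟩
  intro x _ y _ p q hp hq' hpq
  simp only [smul_eq_mul]
  set qx := a * x ^ 2 + 2 * b * x + c with hqx_def
  set qy := a * y ^ 2 + 2 * b * y + c with hqy_def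
  have hqx : 0 ≤ qx := hq x
  have hqy : 0 ≤ qy := hq y
  set sx := Real.sqrt qx with hsx_def
  set sy := Real.sqrt qy with hsy_def
  have hsx0 : 0 ≤ sx := Real.sqrt_nonneg _
  have hsy0 : 0 ≤ sy := Real.sqrt_nonneg _
  have hsx2 : sx ^ 2 = qx := Real.sq_sqrt hqx
  have hsy2 : sy ^ 2 = qy := Real.sq_sqrt hqy
  have hR : 0 ≤ p * sx + q * sy := by positivity
  rw [← Real.sqrt_sq hR]
  apply Real.sqrt_le_sqrt
  set m := a * x * y + b * (x + y) + c with hm_def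
  have hm2 : qx * qy - m ^ 2 = (a * c - b ^ 2) * (x - y) ^ 2 := by
    rw [hqx_def, hqy_def, hm_def]; ring
  have hms : m ≤ sx * sy := by
    rcases le_or_gt m 0 with h | h
    · exact h.trans (by positivity)
    · nlinarith [sq_nonneg (x - y), mul_nonneg hsx0 hsy0]
  have hid : a * (p * x + q * y) ^ 2 + 2 * b * (p * x + q * y) + c
      = p ^ 2 * qx + q ^ 2 * qy + 2 * p * q * m := by
    have hq1 : q = 1 - p := by linarith
    rw [hq1, hqx_def, hqy_def, hm_def]; ring
  rw [hid]
  nlinarith [mul_le_mul_of_nonneg_left hms (by positivity : (0:ℝ) ≤ 2 * p * q)]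

/-- Rank-one perturbations satisfying the orthogonality constraint stay in `SL(2)`. -/
lemma det_line (F : Matrix (Fin 2) (Fin 2) ℝ) (hF : F.det = 1) (ξ η : Fin 2 → ℝ)
    (h0 : ((vecMulVec ξ η)ᵀ * F⁻¹ᵀ).trace = 0) (t : ℝ) :
    (F + t • vecMulVec ξ η).det = 1 := by
  have hinv : F⁻¹ = F.adjugate :=
    Matrix.inv_eq_right_inv (by rw [Matrix.mul_adjugate, hF, one_smul])
  rw [hinv, Matrix.adjugate_fin_two] at h0
  simp [Matrix.trace, Matrix.mul_apply, Fin.sum_univ_two, Matrix.diag,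
    Matrix.transpose_apply, Matrix.vecMulVec_apply, Matrix.cons_val_zero,
    Matrix.cons_val_one, Matrix.head_cons, Matrix.vecHead, Matrix.vecTail,
    Matrix.cons_val', Matrix.empty_val', Matrix.cons_val_fin_one] at h0
  rw [Matrix.det_fin_two] at hF ⊢
  simp only [Matrix.add_apply, Matrix.smul_apply, Matrix.vecMulVec_apply, smul_eq_mul]
  linear_combination hF + t * h0

/-- `tr((F + tξηᵀ)ᵀ(F + tξηᵀ))` is an explicit quadratic in `t`. -/
lemma trace_quad (F : Matrix (Fin 2) (Fin 2) ℝ) (ξ η : Fin 2 → ℝ) (t : ℝ) :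
    ((F + t • vecMulVec ξ η)ᵀ * (F + t • vecMulVec ξ η)).trace =
      ((ξ 0 ^ 2 + ξ 1 ^ 2) * (η 0 ^ 2 + η 1 ^ 2)) * t ^ 2
        + 2 * (F 0 0 * ξ 0 * η 0 + F 0 1 * ξ 0 * η 1 + F 1 0 * ξ 1 * η 0 + F 1 1 * ξ 1 * η 1) * t
        + (Fᵀ * F).trace := by
  simp [Matrix.trace, Matrix.mul_apply, Fin.sum_univ_two, Matrix.diag,
    Matrix.transpose_apply, Matrix.vecMulVec_apply, Matrix.add_apply,
    Matrix.smul_apply, smul_eq_mul]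
  ring

/-- **Dunn–Fosdick–Zhang-type criterion.** For `φ : [0,∞) → ℝ`
differentiable and `W(F) = φ(λmax(F) − 1/λmax(F))` on `SL(2)`, the energy `W`
is rank-one convex iff `φ` is nondecreasing and convex on `[0,∞)`. -/
theorem rankOneConvex_iff_phi_monotone_convex
    (φ : ℝ → ℝ) (hφdiff : DifferentiableOn ℝ φ (Set.Ici 0))
    (W : Matrix (Fin 2) (Fin 2) ℝ → ℝ)
    (hW : ∀ F : Matrix (Fin 2) (Fin 2) ℝ, F.det = 1 →
      W F = φ (lambdaMax F - 1 / lambdaMax F)) :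
    RankOneConvexSL W ↔ MonotoneOn φ (Set.Ici 0) ∧ ConvexOn ℝ (Set.Ici 0) φ := by
  constructor
  · -- Forward: test with `F = 1`, `ξ = e₁`, `η = e₂` (simple shear).
    intro h
    have hdet1 : (1 : Matrix (Fin 2) (Fin 2) ℝ).det = 1 := Matrix.det_one
    have h0 : ((vecMulVec (![1, 0] : Fin 2 → ℝ) ![0, 1])ᵀ
        * (1 : Matrix (Fin 2) (Fin 2) ℝ)⁻¹ᵀ).trace = 0 := by
      simp [Matrix.trace, Matrix.mul_apply, Fin.sum_univ_two, Matrix.diag,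
        Matrix.transpose_apply, Matrix.vecMulVec_apply]
    have hc := h 1 hdet1 ![1, 0] ![0, 1] h0
    have hdet := det_line 1 hdet1 ![1, 0] ![0, 1] h0
    have habs : ∀ t : ℝ, W (1 + t • vecMulVec (![1, 0] : Fin 2 → ℝ) ![0, 1]) = φ |t| := by
      intro t
      rw [hW _ (hdet t), lambdaMax_sub (hdet t)]
      have htr : ((1 + t • vecMulVec (![1, 0] : Fin 2 → ℝ) ![0, 1])ᵀ
          * (1 + t • vecMulVec (![1, 0] : Fin 2 → ℝ) ![0, 1])).trace - 2 = t ^ 2 := by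
        rw [trace_quad]
        simp [Matrix.trace, Matrix.mul_apply, Fin.sum_univ_two, Matrix.diag,
          Matrix.transpose_apply]
        ring
      rw [htr, Real.sqrt_sq_eq_abs]
    have hc' : ConvexOn ℝ Set.univ (fun t : ℝ => φ |t|) := by
      have := hc
      simp only [habs] at this
      exact this
    constructor
    · -- monotone: use convexity of the even function `φ ∘ |·|`
      intro x hx y hy hxy
      rw [Set.mem_Ici] at hx hy
      rcases eq_or_lt_of_le hy with h' | hy'
      · have hx0 : x = 0 := le_antisymm (hxy.trans h'.symm.le) hx
        rw [hx0, ← h']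
      · have hp : (0:ℝ) ≤ (y - x) / (2 * y) := by
          apply div_nonneg <;> linarith
        have hq : (0:ℝ) ≤ (y + x) / (2 * y) := by
          apply div_nonneg <;> linarith
        have hpq : (y - x) / (2 * y) + (y + x) / (2 * y) = 1 := by
          field_simp; ring
        have h2 := hc'.2 (Set.mem_univ (-y)) (Set.mem_univ y) hp hq hpq
        simp only [smul_eq_mul] at h2
        have harg : (y - x) / (2 * y) * (-y) + (y + x) / (2 * y) * y = x := by
          field_simp; ring
        rw [harg, abs_of_nonneg hx, abs_neg, abs_of_nonneg hy] at h2
        have h3 : (y - x) / (2 * y) * φ y + (y + x) / (2 * y) * φ y = φ y := by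
          field_simp; ring
        linarith
    · -- convex: restrict `φ ∘ |·|` to `[0,∞)` where `|x| = x`
      refine ⟨convex_Ici 0, ?_⟩
      intro x hx y hy p q hp hq hpq
      rw [Set.mem_Ici] at hx hy
      have h2 := hc'.2 (Set.mem_univ x) (Set.mem_univ y) hp hq hpq
      simp only [smul_eq_mul] at h2 ⊢
      have hz : 0 ≤ p * x + q * y := add_nonneg (mul_nonneg hp hx) (mul_nonneg hq hy)
      rwa [abs_of_nonneg hx, abs_of_nonneg hy, abs_of_nonneg hz] at h2
  · -- Backward: `φ ∘ (convex nonneg quadratic)^(1/2)` is convex.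
    rintro ⟨hmono, hconv⟩
    intro F hF ξ η h0
    set a := (ξ 0 ^ 2 + ξ 1 ^ 2) * (η 0 ^ 2 + η 1 ^ 2) with ha_def
    set b := F 0 0 * ξ 0 * η 0 + F 0 1 * ξ 0 * η 1 + F 1 0 * ξ 1 * η 0 + F 1 1 * ξ 1 * η 1
      with hb_def
    set c := (Fᵀ * F).trace - 2 with hc_def
    have hdet := det_line F hF ξ η h0
    have htq : ∀ t : ℝ, ((F + t • vecMulVec ξ η)ᵀ * (F + t • vecMulVec ξ η)).trace - 2
        = a * t ^ 2 + 2 * b * t + c := by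
      intro t
      rw [trace_quad, ha_def, hb_def, hc_def]
      ring
    have hq : ∀ t : ℝ, 0 ≤ a * t ^ 2 + 2 * b * t + c := by
      intro t
      rw [← htq t]
      linarith [trace_ge_two (hdet t)]
    have hWr : ∀ t : ℝ, W (F + t • vecMulVec ξ η)
        = φ (Real.sqrt (a * t ^ 2 + 2 * b * t + c)) := by
      intro t
      rw [hW _ (hdet t), lambdaMax_sub (hdet t), ← htq t]
    have ha0 : 0 ≤ a := by rw [ha_def]; positivity
    have hg := convexOn_sqrt_quad a b c ha0 hq
    refine ⟨convex_univ, ?_⟩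
    intro x _ y _ p q hp hq' hpq
    simp only [smul_eq_mul, hWr]
    have h1 := hg.2 (Set.mem_univ x) (Set.mem_univ y) hp hq' hpq
    simp only [smul_eq_mul] at h1
    have hz0 : Real.sqrt (a * (p * x + q * y) ^ 2 + 2 * b * (p * x + q * y) + c)
        ∈ Set.Ici (0:ℝ) := Set.mem_Ici.mpr (Real.sqrt_nonneg _)
    have hcomb : p * Real.sqrt (a * x ^ 2 + 2 * b * x + c)
        + q * Real.sqrt (a * y ^ 2 + 2 * b * y + c) ∈ Set.Ici (0:ℝ) := by
      apply Set.mem_Ici.mpr; positivity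
    calc φ (Real.sqrt (a * (p * x + q * y) ^ 2 + 2 * b * (p * x + q * y) + c))
        ≤ φ (p * Real.sqrt (a * x ^ 2 + 2 * b * x + c)
            + q * Real.sqrt (a * y ^ 2 + 2 * b * y + c)) := hmono hz0 hcomb h1
      _ ≤ p * φ (Real.sqrt (a * x ^ 2 + 2 * b * x + c))
            + q * φ (Real.sqrt (a * y ^ 2 + 2 * b * y + c)) := by
          have hmx : Real.sqrt (a * x ^ 2 + 2 * b * x + c) ∈ Set.Ici (0:ℝ) :=
            Set.mem_Ici.mpr (Real.sqrt_nonneg _)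
          have hmy : Real.sqrt (a * y ^ 2 + 2 * b * y + c) ∈ Set.Ici (0:ℝ) :=
            Set.mem_Ici.mpr (Real.sqrt_nonneg _)
          simpa using hconv.2 hmx hmy hp hq' hpq
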